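/- There exist constants c, c' > 0 such that for every n ∈ ℕ there are regex formulas e_n and e_n' of size at most c·n such that every sequential variable-set automaton defining the natural join e_n ⋈ e_n' has at least 2^{c'·n} states. -/

import Mathlib

namespace DocSpanners

/-- A span: a pair of endpoint positions `[i, j⟩`. -/
abbrev Span : Type := ℕ × ℕ

/-- `s` is a span of document `d`. -/
def IsSpanOf {α : Type} (d : List α) (s : Span) : Prop :=
  s.1 ≤ s.2 ∧ s.2 ≤ d.length

/-- A (schemaless) mapping over variable type `V`: a partial assignment of spans. -/
abbrev Mapping (V : Type) : Type := V → Option Span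

/-- `m` is a mapping of document `d`. -/
def MappingOf {α V : Type} (d : List α) (m : Mapping V) : Prop :=
  ∀ x s, m x = some s → IsSpanOf d s

/-- A spanner: maps documents to sets of mappings. -/
abbrev Spanner (α V : Type) : Type := List α → Set (Mapping V)

/-- Labels of a variable-set automaton: letters and variable markers. -/
inductive Label (α V : Type) : Type where
  | letter (a : α)
  | vopen (x : V)
  | vclose (x : V)
deriving DecidableEq

/-- The sequence of letters of a ref-word. -/
def letters {α V : Type} (w : List (Label α V)) : List α :=
  w.filterMap fun l => match l with
    | Label.letter a => some a
    | _ => none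

/-- A ref-word is valid if for each variable, either its markers do not appear, or
the opening and closing markers appear exactly once with the opening first. -/
def ValidRef {α V : Type} [DecidableEq α] [DecidableEq V] (w : List (Label α V)) : Prop :=
  ∀ x : V,
    (Label.vopen x ∉ w ∧ Label.vclose x ∉ w) ∨
    (w.count (Label.vopen x) = 1 ∧ w.count (Label.vclose x) = 1 ∧
      w.idxOf (Label.vopen x) < w.idxOf (Label.vclose x))

/-- The mapping defined by a (valid) ref-word: each marked variable is sent to the
span delimited by the positions at which its markers are read. -/
def refMapping {α V : Type} [DecidableEq α] [DecidableEq V] (w : List (Label α V)) :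
    Mapping V := fun x =>
  if Label.vopen x ∈ w then
    some ((letters (w.take (w.idxOf (Label.vopen x)))).length,
          (letters (w.take (w.idxOf (Label.vclose x)))).length)
  else none

/-- A variable-set automaton with state type `Q`. -/
structure VA (α V Q : Type) : Type where
  init : Q
  final : Set Q
  trans : Q → Label α V → Q → Prop

/-- Paths in a VA. -/
inductive VA.Path {α V Q : Type} (A : VA α V Q) : Q → List (Label α V) → Q → Prop where
  | nil (q : Q) : VA.Path A q [] q
  | cons {q q' q'' : Q} {l : Label α V} {w : List (Label α V)} :
      A.trans q l q' → VA.Path A q' w q'' → VA.Path A q (l :: w) q''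

/-- The VA accepts the ref-word `w` (an accepting run reads `w`). -/
def VA.AcceptsRef {α V Q : Type} (A : VA α V Q) (w : List (Label α V)) : Prop :=
  ∃ qf ∈ A.final, A.Path A.init w qf

/-- A VA is sequential if every accepting run is valid. -/
def VA.Sequential {α V Q : Type} [DecidableEq α] [DecidableEq V] (A : VA α V Q) : Prop :=
  ∀ w, A.AcceptsRef w → ValidRef w

/-- The spanner defined by a (sequential) VA. -/
def VA.spanner {α V Q : Type} [DecidableEq α] [DecidableEq V] (A : VA α V Q) :
    Spanner α V := fun d =>
  {m | ∃ w, A.AcceptsRef w ∧ letters w = d ∧ refMapping w = m}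

/-- A spanner is regular if it is defined by some sequential VA with finitely many states. -/
def IsRegular {α V : Type} [DecidableEq α] [DecidableEq V] (P : Spanner α V) : Prop :=
  ∃ (Q : Type) (_ : Fintype Q) (A : VA α V Q), A.Sequential ∧ A.spanner = P

/-- The skyline operator: keep only the mappings of `P d` that are maximal under `R d`. -/
def skyline {α V : Type} (P : Spanner α V)
    (R : List α → Mapping V → Mapping V → Prop) : Spanner α V := fun d =>
  {m | m ∈ P d ∧ ∀ m' ∈ P d, m' ≠ m → ¬ R d m m'}

/-- The variable inclusion domination relation: `m2` extends `m1`. -/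
def varIncRel {V : Type} (m1 m2 : Mapping V) : Prop :=
  ∀ x s, m1 x = some s → m2 x = some s

/-- Two mappings have the same domain. -/
def sameDom {V : Type} (m1 m2 : Mapping V) : Prop :=
  ∀ x, m1 x = none ↔ m2 x = none

/-- The span inclusion domination relation. -/
def spanIncRel {V : Type} (m1 m2 : Mapping V) : Prop :=
  sameDom m1 m2 ∧
    ∀ x s1 s2, m1 x = some s1 → m2 x = some s2 → s2.1 ≤ s1.1 ∧ s1.2 ≤ s2.2

/-- The left-to-right domination relation: same start, `m2` no shorter. -/
def ltrRel {V : Type} (m1 m2 : Mapping V) : Prop :=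
  sameDom m1 m2 ∧
    ∀ x s1 s2, m1 x = some s1 → m2 x = some s2 →
      s1.1 = s2.1 ∧ s1.2 - s1.1 ≤ s2.2 - s2.1

/-- The span length domination relation: `m2`'s spans are no shorter. -/
def spanLenRel {V : Type} (m1 m2 : Mapping V) : Prop :=
  sameDom m1 m2 ∧
    ∀ x s1 s2, m1 x = some s1 → m2 x = some s2 → s1.2 - s1.1 ≤ s2.2 - s2.1


/-- Regex formulas with variable captures. -/
inductive Regex (α V : Type) : Type where
  | empty
  | eps
  | char (a : α)
  | disj (e1 e2 : Regex α V)
  | concat (e1 e2 : Regex α V)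
  | star (e : Regex α V)
  | cap (x : V) (e : Regex α V)

/-- The size of a regex formula. -/
def Regex.size {α V : Type} : Regex α V → ℕ
  | .empty => 1
  | .eps => 1
  | .char _ => 1
  | .disj e1 e2 => e1.size + e2.size + 1
  | .concat e1 e2 => e1.size + e2.size + 1
  | .star e => e.size + 1
  | .cap _ e => e.size + 1

/-- The ref-word language of a regex formula. -/
def Regex.refLang {α V : Type} : Regex α V → Language (Label α V)
  | .empty => 0
  | .eps => 1
  | .char a => {[Label.letter a]}
  | .disj e1 e2 => e1.refLang + e2.refLang
  | .concat e1 e2 => e1.refLang * e2.refLang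
  | .star e => KStar.kstar e.refLang
  | .cap x e => {w | ∃ u ∈ e.refLang, w = Label.vopen x :: (u ++ [Label.vclose x])}

/-- The spanner defined by a regex formula. -/
def Regex.spanner {α V : Type} [DecidableEq α] [DecidableEq V] (e : Regex α V) :
    Spanner α V := fun d =>
  {m | ∃ w ∈ e.refLang, ValidRef w ∧ letters w = d ∧ refMapping w = m}

/-- Two mappings are compatible if they agree on their common domain. -/
def Compatible {V : Type} (m1 m2 : Mapping V) : Prop :=
  ∀ x s1 s2, m1 x = some s1 → m2 x = some s2 → s1 = s2

/-- The natural join of two spanners. -/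
def joinSpanner {α V : Type} (P1 P2 : Spanner α V) : Spanner α V := fun d =>
  {m | ∃ m1 ∈ P1 d, ∃ m2 ∈ P2 d, Compatible m1 m ∧ Compatible m2 m ∧
        ∀ x, m x ≠ none ↔ (m1 x ≠ none ∨ m2 x ≠ none)}


section Aux
open List

abbrev Lab := Label Unit ℕ

def la : Lab := Label.letter ()

def padWord (p : ℕ) : List Lab := List.replicate p la

def blockSeq (S : Finset ℕ) : ℕ → ℕ → List Lab
  | _, 0 => []
  | s, (k+1) => (if s ∈ S then [Label.vopen s, la, Label.vclose s] else [la]) ++ blockSeq S (s+1) k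

lemma letters_append (u v : List Lab) : letters (u ++ v) = letters u ++ letters v := by
  simp [letters, List.filterMap_append]

@[simp] lemma letters_nil : letters ([] : List Lab) = [] := rfl

@[simp] lemma letters_cons_letter (w : List Lab) : letters (la :: w) = () :: letters w := by
  simp [letters, List.filterMap_cons, la]

@[simp] lemma letters_cons_open (x : ℕ) (w : List Lab) :
    letters (Label.vopen x :: w) = letters w := by
  simp [letters, List.filterMap_cons]

@[simp] lemma letters_cons_close (x : ℕ) (w : List Lab) :
    letters (Label.vclose x :: w) = letters w := by
  simp [letters, List.filterMap_cons]

lemma letters_padWord (p : ℕ) : letters (padWord p) = List.replicate p () := by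
  induction p with
  | zero => simp [padWord]
  | succ p ih => simp [padWord, List.replicate_succ] at ih ⊢; simpa using ih

lemma letters_blockSeq (S : Finset ℕ) (s k : ℕ) :
    letters (blockSeq S s k) = List.replicate k () := by
  induction k generalizing s with
  | zero => simp [blockSeq]
  | succ k ih =>
    by_cases h : s ∈ S <;>
      simp [blockSeq, h, letters_append, ih, List.replicate_succ]

lemma not_mem_padWord_open (x p : ℕ) : Label.vopen x ∉ padWord p := by
  simp [padWord, List.mem_replicate, la]

lemma not_mem_padWord_close (x p : ℕ) : Label.vclose x ∉ padWord p := by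
  simp [padWord, List.mem_replicate, la]

lemma mem_blockSeq_open {S : Finset ℕ} {s k x : ℕ} :
    Label.vopen x ∈ blockSeq S s k ↔ x ∈ S ∧ s ≤ x ∧ x < s + k := by
  induction k generalizing s with
  | zero => simp [blockSeq]
  | succ k ih =>
    constructor
    · intro hm
      rcases List.mem_append.1 hm with hm | hm
      · by_cases h : s ∈ S <;> simp [h, la] at hm
        exact ⟨by rw [hm]; exact h, by omega⟩
      · have := ih.1 hm
        exact ⟨this.1, by omega⟩
    · rintro ⟨hx, h1, h2⟩
      by_cases hxs : x = s
      · subst hxs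
        exact List.mem_append.2 (Or.inl (by simp [hx]))
      · exact List.mem_append.2 (Or.inr (ih.2 ⟨hx, by omega, by omega⟩))

lemma mem_blockSeq_close {S : Finset ℕ} {s k x : ℕ} :
    Label.vclose x ∈ blockSeq S s k ↔ x ∈ S ∧ s ≤ x ∧ x < s + k := by
  induction k generalizing s with
  | zero => simp [blockSeq]
  | succ k ih =>
    constructor
    · intro hm
      rcases List.mem_append.1 hm with hm | hm
      · by_cases h : s ∈ S <;> simp [h, la] at hm
        exact ⟨by rw [hm]; exact h, by omega⟩
      · have := ih.1 hm
        exact ⟨this.1, by omega⟩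
    · rintro ⟨hx, h1, h2⟩
      by_cases hxs : x = s
      · subst hxs
        exact List.mem_append.2 (Or.inl (by simp [hx]))
      · exact List.mem_append.2 (Or.inr (ih.2 ⟨hx, by omega, by omega⟩))

lemma count_blockSeq_open (S : Finset ℕ) (s k x : ℕ) :
    (blockSeq S s k).count (Label.vopen x) =
      if x ∈ S ∧ s ≤ x ∧ x < s + k then 1 else 0 := by
  induction k generalizing s with
  | zero =>
    simp only [blockSeq, List.count_nil]
    rw [if_neg (by rintro ⟨-, h1, h2⟩; omega)]
  | succ k ih =>
    rw [blockSeq, List.count_append, ih]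
    by_cases hxs : x = s
    · subst hxs
      by_cases h : x ∈ S <;>
        simp [h, la, List.count_cons] <;> split_ifs <;> omega
    · have hiff : (x ∈ S ∧ s < x ∧ x < s + 1 + k) ↔
          (x ∈ S ∧ s ≤ x ∧ x < s + (k + 1)) := by
        constructor <;> rintro ⟨a, b, c⟩ <;> exact ⟨a, by omega, by omega⟩
      by_cases h : s ∈ S <;>
        simp [h, la, List.count_cons, hxs, Ne.symm hxs, hiff]

lemma count_blockSeq_close (S : Finset ℕ) (s k x : ℕ) :
    (blockSeq S s k).count (Label.vclose x) =
      if x ∈ S ∧ s ≤ x ∧ x < s + k then 1 else 0 := by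
  induction k generalizing s with
  | zero =>
    simp only [blockSeq, List.count_nil]
    rw [if_neg (by rintro ⟨-, h1, h2⟩; omega)]
  | succ k ih =>
    rw [blockSeq, List.count_append, ih]
    by_cases hxs : x = s
    · subst hxs
      by_cases h : x ∈ S <;>
        simp [h, la, List.count_cons] <;> split_ifs <;> omega
    · have hiff : (x ∈ S ∧ s < x ∧ x < s + 1 + k) ↔
          (x ∈ S ∧ s ≤ x ∧ x < s + (k + 1)) := by
        constructor <;> rintro ⟨a, b, c⟩ <;> exact ⟨a, by omega, by omega⟩
      by_cases h : s ∈ S <;>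
        simp [h, la, List.count_cons, hxs, Ne.symm hxs, hiff]

lemma blockSeq_split {S : Finset ℕ} {s k x : ℕ} (hx : x ∈ S) (h1 : s ≤ x) (h2 : x < s + k) :
    blockSeq S s k = blockSeq S s (x - s) ++
      Label.vopen x :: la :: Label.vclose x :: blockSeq S (x + 1) (s + k - x - 1) := by
  induction k generalizing s with
  | zero => omega
  | succ k ih =>
    by_cases hxs : x = s
    · subst hxs
      have : x - x = 0 := by omega
      rw [blockSeq, if_pos hx, this]
      simp [blockSeq]
    · have hsx : s + 1 ≤ x := by omega
      have hx2 : x < s + 1 + k := by omega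
      rw [blockSeq, ih hsx hx2]
      have hxss : x - s = (x - (s + 1)) + 1 := by omega
      rw [hxss, blockSeq]
      have h3 : s + 1 + k - x - 1 = s + (k + 1) - x - 1 := by omega
      rw [h3, List.append_assoc]

lemma indexOf_append_cons {u : List Lab} {x : Lab} (v : List Lab) (h : x ∉ u) :
    (u ++ x :: v).idxOf x = u.length := by
  induction u with
  | nil => simp
  | cons a u ih =>
    have hax : ¬ (a == x) := by
      simp only [List.mem_cons, not_or] at h
      simp [Ne.symm h.1]
    simp only [List.cons_append, List.idxOf_cons, hax, cond_false]
    rw [ih (fun hm => h (List.mem_cons_of_mem _ hm))]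
    simp

lemma indexOf_lt_of_mem_take {l : List Lab} {x : Lab} {k : ℕ} (h : x ∈ l.take k) :
    l.idxOf x < k := by
  induction l generalizing k with
  | nil => simp at h
  | cons a l ih =>
    cases k with
    | zero => simp at h
    | succ k =>
      simp only [List.take_succ_cons, List.mem_cons] at h
      by_cases hax : a = x
      · subst hax; simp [List.idxOf_cons_self]
      · rcases h with h | h
        · exact absurd h.symm hax
        · have hax' : ¬ (a == x) := by simp [hax]
          simp only [List.idxOf_cons, hax', cond_false]
          have := ih h
          omega

lemma mem_take_of_indexOf {l : List Lab} {x : Lab} {k : ℕ} (hm : x ∈ l)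
    (h : l.idxOf x < k) : x ∈ l.take k := by
  induction l generalizing k with
  | nil => simp at hm
  | cons a l ih =>
    by_cases hax : a = x
    · subst hax
      cases k with
      | zero => simp [List.idxOf_cons_self] at h
      | succ k => simp
    · have hax' : ¬ (a == x) := by simp [hax]
      simp only [List.idxOf_cons, hax', cond_false] at h
      rcases List.mem_cons.1 hm with hh | hh
      · exact absurd hh.symm hax
      · cases k with
        | zero => omega
        | succ k =>
          simp only [List.take_succ_cons, List.mem_cons]
          exact Or.inr (ih hh (by omega))

lemma lcount_mono (w : List Lab) {j j' : ℕ} (h : j ≤ j') :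
    (letters (w.take j)).length ≤ (letters (w.take j')).length := by
  have : w.take j = (w.take j').take j := by
    rw [List.take_take, min_eq_left h]
  rw [this]
  conv_rhs => rw [← List.take_append_drop j (w.take j')]
  rw [letters_append, List.length_append]
  omega

lemma path_append {Q : Type} {A : VA Unit ℕ Q} {q q'' : Q} {u v : List Lab}
    (h : VA.Path A q (u ++ v) q'') : ∃ q', VA.Path A q u q' ∧ VA.Path A q' v q'' := by
  induction u generalizing q with
  | nil => exact ⟨q, VA.Path.nil q, by simpa using h⟩
  | cons a u ih =>
    cases h with
    | cons ht hp =>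
      obtain ⟨q', h1, h2⟩ := ih hp
      exact ⟨q', VA.Path.cons ht h1, h2⟩

lemma path_comp {Q : Type} {A : VA Unit ℕ Q} {q q' q'' : Q} {u v : List Lab}
    (h1 : VA.Path A q u q') (h2 : VA.Path A q' v q'') : VA.Path A q (u ++ v) q'' := by
  induction h1 with
  | nil => simpa using h2
  | cons ht hp ih => exact VA.Path.cons ht (ih h2)

lemma word_split (p q : ℕ) {S : Finset ℕ} {x k : ℕ} (hx : x ∈ S) (hk : x < k) :
    padWord p ++ blockSeq S 0 k ++ padWord q =
      (padWord p ++ blockSeq S 0 x) ++ Label.vopen x :: la :: Label.vclose x ::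
        (blockSeq S (x + 1) (k - x - 1) ++ padWord q) := by
  rw [blockSeq_split hx (Nat.zero_le x) (by omega)]
  simp only [Nat.sub_zero, Nat.zero_add, List.append_assoc, List.cons_append]

lemma not_open_prefix {S : Finset ℕ} {x p j : ℕ} (hj : j ≤ x) :
    Label.vopen x ∉ padWord p ++ blockSeq S 0 j := by
  intro h
  rcases List.mem_append.1 h with h | h
  · exact not_mem_padWord_open x p h
  · have := mem_blockSeq_open.1 h
    omega

lemma not_close_prefix2 {S : Finset ℕ} {x p j : ℕ} (hj : j ≤ x) :
    Label.vclose x ∉ (padWord p ++ blockSeq S 0 j) ++ [Label.vopen x, la] := by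
  intro h
  rcases List.mem_append.1 h with h | h
  · rcases List.mem_append.1 h with h | h
    · exact not_mem_padWord_close x p h
    · have := mem_blockSeq_close.1 h
      omega
  · simp [la] at h

lemma length_letters_prefix (p j : ℕ) (S : Finset ℕ) :
    (letters (padWord p ++ blockSeq S 0 j)).length = p + j := by
  rw [letters_append, letters_padWord, letters_blockSeq]
  simp

lemma word_indexOf_open (p q : ℕ) {S : Finset ℕ} {x k : ℕ} (hx : x ∈ S) (hk : x < k) :
    (padWord p ++ blockSeq S 0 k ++ padWord q).idxOf (Label.vopen x) =
      (padWord p ++ blockSeq S 0 x).length := by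
  rw [word_split p q hx hk]
  exact indexOf_append_cons _ (not_open_prefix le_rfl)

lemma word_indexOf_close (p q : ℕ) {S : Finset ℕ} {x k : ℕ} (hx : x ∈ S) (hk : x < k) :
    (padWord p ++ blockSeq S 0 k ++ padWord q).idxOf (Label.vclose x) =
      (padWord p ++ blockSeq S 0 x).length + 2 := by
  rw [word_split p q hx hk]
  have he : (padWord p ++ blockSeq S 0 x) ++ Label.vopen x :: la :: Label.vclose x ::
        (blockSeq S (x + 1) (k - x - 1) ++ padWord q) =
      ((padWord p ++ blockSeq S 0 x) ++ [Label.vopen x, la]) ++ Label.vclose x ::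
        (blockSeq S (x + 1) (k - x - 1) ++ padWord q) := by
    simp
  rw [he, indexOf_append_cons _ (not_close_prefix2 le_rfl)]
  simp
  omega

lemma refMapping_word (p k q : ℕ) (S : Finset ℕ) :
    refMapping (padWord p ++ blockSeq S 0 k ++ padWord q) =
      fun x => if x ∈ S ∧ x < k then some (p + x, p + x + 1) else none := by
  funext x
  by_cases hx : x ∈ S ∧ x < k
  · have hmem : Label.vopen x ∈ padWord p ++ blockSeq S 0 k ++ padWord q := by
      rw [word_split p q hx.1 hx.2]
      exact List.mem_append.2 (Or.inr (by simp))
    rw [refMapping, if_pos hmem, if_pos hx,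
      word_indexOf_open p q hx.1 hx.2, word_indexOf_close p q hx.1 hx.2]
    rw [word_split p q hx.1 hx.2]
    have ht1 : ((padWord p ++ blockSeq S 0 x) ++ Label.vopen x :: la :: Label.vclose x ::
          (blockSeq S (x + 1) (k - x - 1) ++ padWord q)).take
          (padWord p ++ blockSeq S 0 x).length = padWord p ++ blockSeq S 0 x :=
      List.take_left
    have ht2 : ((padWord p ++ blockSeq S 0 x) ++ Label.vopen x :: la :: Label.vclose x ::
          (blockSeq S (x + 1) (k - x - 1) ++ padWord q)).take
          ((padWord p ++ blockSeq S 0 x).length + 2) =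
          (padWord p ++ blockSeq S 0 x) ++ [Label.vopen x, la] := by
      have he : (padWord p ++ blockSeq S 0 x) ++ Label.vopen x :: la :: Label.vclose x ::
            (blockSeq S (x + 1) (k - x - 1) ++ padWord q) =
          ((padWord p ++ blockSeq S 0 x) ++ [Label.vopen x, la]) ++ Label.vclose x ::
            (blockSeq S (x + 1) (k - x - 1) ++ padWord q) := by simp
      have hl : (padWord p ++ blockSeq S 0 x).length + 2 =
          ((padWord p ++ blockSeq S 0 x) ++ [Label.vopen x, la]).length := by
        simp
        omega
      rw [he, hl, List.take_left]
    rw [List.append_assoc] at ht1 ht2 ⊢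
    rw [ht1, ht2]
    have e1 : (letters (padWord p ++ blockSeq S 0 x)).length = p + x :=
      length_letters_prefix p x S
    have e2 : (letters ((padWord p ++ blockSeq S 0 x) ++ [Label.vopen x, la])).length
        = p + x + 1 := by
      rw [letters_append, List.length_append, e1]
      simp [letters, List.filterMap_cons, la]
    rw [e1, e2]
  · have hmem : Label.vopen x ∉ padWord p ++ blockSeq S 0 k ++ padWord q := by
      intro h
      rcases List.mem_append.1 h with h | h
      · rcases List.mem_append.1 h with h | h
        · exact not_mem_padWord_open x p h
        · have := mem_blockSeq_open.1 h
          exact hx ⟨this.1, by omega⟩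
      · exact not_mem_padWord_open x q h
    rw [refMapping, if_neg hmem, if_neg hx]

lemma valid_word (p k q : ℕ) (S : Finset ℕ) :
    ValidRef (padWord p ++ blockSeq S 0 k ++ padWord q) := by
  intro x
  by_cases hx : x ∈ S ∧ x < k
  · right
    have hc1 : (padWord p ++ blockSeq S 0 k ++ padWord q).count (Label.vopen x) = 1 := by
      rw [List.count_append, List.count_append,
        List.count_eq_zero_of_not_mem (not_mem_padWord_open x p),
        List.count_eq_zero_of_not_mem (not_mem_padWord_open x q),
        count_blockSeq_open, if_pos ⟨hx.1, Nat.zero_le x, by omega⟩]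
    have hc2 : (padWord p ++ blockSeq S 0 k ++ padWord q).count (Label.vclose x) = 1 := by
      rw [List.count_append, List.count_append,
        List.count_eq_zero_of_not_mem (not_mem_padWord_close x p),
        List.count_eq_zero_of_not_mem (not_mem_padWord_close x q),
        count_blockSeq_close, if_pos ⟨hx.1, Nat.zero_le x, by omega⟩]
    refine ⟨hc1, hc2, ?_⟩
    rw [word_indexOf_open p q hx.1 hx.2, word_indexOf_close p q hx.1 hx.2]
    omega
  · left
    constructor
    · intro h
      rcases List.mem_append.1 h with h | h
      · rcases List.mem_append.1 h with h | h
        · exact not_mem_padWord_open x p h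
        · have := mem_blockSeq_open.1 h
          exact hx ⟨this.1, by omega⟩
      · exact not_mem_padWord_open x q h
    · intro h
      rcases List.mem_append.1 h with h | h
      · rcases List.mem_append.1 h with h | h
        · exact not_mem_padWord_close x p h
        · have := mem_blockSeq_close.1 h
          exact hx ⟨this.1, by omega⟩
      · exact not_mem_padWord_close x q h

def slots : ℕ → ℕ → Regex Unit ℕ
  | _, 0 => .eps
  | s, (k+1) => .concat (.disj (.cap s (.char ())) (.char ())) (slots (s+1) k)

def padRe : ℕ → Regex Unit ℕ
  | 0 => .eps
  | (k+1) => .concat (.char ()) (padRe k)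

lemma slots_size (s k : ℕ) : (slots s k).size = 5 * k + 1 := by
  induction k generalizing s with
  | zero => rfl
  | succ k ih => simp [slots, Regex.size, ih]; omega

lemma padRe_size (k : ℕ) : (padRe k).size = 2 * k + 1 := by
  induction k with
  | zero => rfl
  | succ k ih => simp [padRe, Regex.size, ih]; omega

lemma char_refLang : (Regex.char () : Regex Unit ℕ).refLang = {[la]} := rfl

lemma mem_singleton_lang {w u : List Lab} : w ∈ ({u} : Language Lab) ↔ w = u :=
  Set.mem_singleton_iff

lemma blockSeq_mem_slots (S : Finset ℕ) (s k : ℕ) :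
    blockSeq S s k ∈ (slots s k).refLang := by
  induction k generalizing s with
  | zero => simp [slots, blockSeq, Regex.refLang, Language.mem_one]
  | succ k ih =>
    rw [slots, Regex.refLang, blockSeq]
    refine Language.mem_mul.2 ⟨_, ?_, _, ih (s+1), rfl⟩
    refine (Language.mem_add _ _ _).2 ?_
    by_cases h : s ∈ S
    · left
      rw [if_pos h]
      simp only [Regex.refLang, Set.mem_setOf_eq]
      exact ⟨[la], rfl, by simp [la]⟩
    · right
      rw [if_neg h]
      exact rfl

lemma padWord_mem_padRe (k : ℕ) : padWord k ∈ (padRe k).refLang := by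
  induction k with
  | zero => simp [padRe, padWord, Regex.refLang, Language.mem_one]
  | succ k ih =>
    rw [padRe, Regex.refLang]
    refine Language.mem_mul.2 ⟨[la], rfl, _, ih, ?_⟩
    simp [padWord, List.replicate_succ]

lemma blockSeq_congr {S S' : Finset ℕ} {s k : ℕ}
    (h : ∀ i, s ≤ i → i < s + k → (i ∈ S ↔ i ∈ S')) :
    blockSeq S s k = blockSeq S' s k := by
  induction k generalizing s with
  | zero => rfl
  | succ k ih =>
    rw [blockSeq, blockSeq, ih (fun i h1 h2 => h i (by omega) (by omega))]
    by_cases hss : s ∈ S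
    · rw [if_pos hss, if_pos ((h s le_rfl (by omega)).1 hss)]
    · rw [if_neg hss, if_neg (fun hh => hss ((h s le_rfl (by omega)).2 hh))]

lemma mem_slots_iff {w : List Lab} {s k : ℕ} (h : w ∈ (slots s k).refLang) :
    ∃ S : Finset ℕ, w = blockSeq S s k := by
  induction k generalizing s w with
  | zero =>
    simp [slots, Regex.refLang, Language.mem_one] at h
    exact ⟨∅, by simp [h, blockSeq]⟩
  | succ k ih =>
    rw [slots, Regex.refLang] at h
    obtain ⟨u, hu, v, hv, rfl⟩ := Language.mem_mul.1 h
    obtain ⟨S', rfl⟩ := ih hv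
    rcases (Language.mem_add _ _ _).1 hu with hu | hu
    · simp only [Regex.refLang, Set.mem_setOf_eq] at hu
      obtain ⟨u', hu', rfl⟩ := hu
      rw [mem_singleton_lang] at hu'
      subst hu'
      refine ⟨insert s S', ?_⟩
      rw [blockSeq, if_pos (Finset.mem_insert_self s S')]
      have : blockSeq (insert s S') (s+1) k = blockSeq S' (s+1) k := by
        apply blockSeq_congr
        intro i h1 h2
        simp only [Finset.mem_insert]
        constructor
        · rintro (rfl | hh)
          · omega
          · exact hh
        · exact fun hh => Or.inr hh
      rw [this]
      simp [la]
    · rw [char_refLang, mem_singleton_lang] at hu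
      subst hu
      refine ⟨S' \ {s}, ?_⟩
      rw [blockSeq, if_neg (by simp)]
      have : blockSeq (S' \ {s}) (s+1) k = blockSeq S' (s+1) k := by
        apply blockSeq_congr
        intro i h1 h2
        simp only [Finset.mem_sdiff, Finset.mem_singleton]
        constructor
        · exact fun hh => hh.1
        · exact fun hh => ⟨hh, by omega⟩
      rw [this]

lemma mem_padRe_iff {w : List Lab} {k : ℕ} (h : w ∈ (padRe k).refLang) :
    w = padWord k := by
  induction k generalizing w with
  | zero =>
    simp [padRe, Regex.refLang, Language.mem_one] at h
    simp [h, padWord]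
  | succ k ih =>
    rw [padRe, Regex.refLang] at h
    obtain ⟨u, hu, v, hv, rfl⟩ := Language.mem_mul.1 h
    rw [char_refLang, mem_singleton_lang] at hu
    subst hu
    rw [ih hv]
    simp [padWord, List.replicate_succ, la]

def eRegex (n : ℕ) : Regex Unit ℕ := .concat (slots 0 n) (padRe (n+1))
def eRegex' (n : ℕ) : Regex Unit ℕ := .concat (padRe (n+1)) (slots 0 n)

lemma eRegex_valid (n : ℕ) : ∀ w ∈ (eRegex n).refLang, ValidRef w := by
  intro w hw
  rw [eRegex, Regex.refLang] at hw
  obtain ⟨u, hu, v, hv, rfl⟩ := Language.mem_mul.1 hw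
  obtain ⟨S, rfl⟩ := mem_slots_iff hu
  rw [mem_padRe_iff hv]
  have := valid_word 0 n (n+1) S
  simpa [padWord] using this

lemma eRegex'_valid (n : ℕ) : ∀ w ∈ (eRegex' n).refLang, ValidRef w := by
  intro w hw
  rw [eRegex', Regex.refLang] at hw
  obtain ⟨u, hu, v, hv, rfl⟩ := Language.mem_mul.1 hw
  obtain ⟨S, rfl⟩ := mem_slots_iff hv
  rw [mem_padRe_iff hu]
  have := valid_word (n+1) n 0 S
  simpa [padWord] using this

def mjoin (n : ℕ) (S : Finset ℕ) : Mapping ℕ := fun x =>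
  if x ∈ S ∧ x < n then some (x, x + 1)
  else if x < n then some (n + 1 + x, n + 1 + x + 1) else none

lemma m1_spec (n : ℕ) (S : Finset ℕ) :
    refMapping (blockSeq S 0 n ++ padWord (n+1)) =
      fun x => if x ∈ S ∧ x < n then some (x, x + 1) else none := by
  have := refMapping_word 0 n (n+1) S
  simpa [padWord] using this

lemma m2_spec (n : ℕ) (S : Finset ℕ) :
    refMapping (padWord (n+1) ++ blockSeq S 0 n) =
      fun x => if x ∈ S ∧ x < n then some (n + 1 + x, n + 1 + x + 1) else none := by
  have := refMapping_word (n+1) n 0 S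
  simpa [padWord] using this

lemma m1_mem (n : ℕ) (S : Finset ℕ) :
    (fun x => if x ∈ S ∧ x < n then some (x, x + 1) else none) ∈
      (eRegex n).spanner (List.replicate (2*n+1) ()) := by
  refine ⟨blockSeq S 0 n ++ padWord (n+1), ?_, ?_, ?_, m1_spec n S⟩
  · rw [eRegex, Regex.refLang]
    exact Language.mem_mul.2 ⟨_, blockSeq_mem_slots S 0 n, _, padWord_mem_padRe (n+1), rfl⟩
  · have := valid_word 0 n (n+1) S
    simpa [padWord] using this
  · rw [letters_append, letters_blockSeq, letters_padWord, ← List.replicate_add]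
    congr 1
    omega

lemma m2_mem (n : ℕ) (S : Finset ℕ) :
    (fun x => if x ∈ S ∧ x < n then some (n + 1 + x, n + 1 + x + 1) else none) ∈
      (eRegex' n).spanner (List.replicate (2*n+1) ()) := by
  refine ⟨padWord (n+1) ++ blockSeq S 0 n, ?_, ?_, ?_, m2_spec n S⟩
  · rw [eRegex', Regex.refLang]
    exact Language.mem_mul.2 ⟨_, padWord_mem_padRe (n+1), _, blockSeq_mem_slots S 0 n, rfl⟩
  · have := valid_word (n+1) n 0 S
    simpa [padWord] using this
  · rw [letters_append, letters_blockSeq, letters_padWord, ← List.replicate_add]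
    congr 1
    omega

lemma mjoin_mem (n : ℕ) (S : Finset ℕ) :
    mjoin n S ∈ joinSpanner (eRegex n).spanner (eRegex' n).spanner
      (List.replicate (2*n+1) ()) := by
  refine ⟨_, m1_mem n S, _, m2_mem n ((Finset.range n) \ S), ?_, ?_, ?_⟩
  · intro x s1 s2 h1 h2
    simp only at h1
    split_ifs at h1 with hc
    rw [mjoin] at h2
    rw [if_pos hc] at h2
    rw [← Option.some_inj.1 h1, ← Option.some_inj.1 h2]
  · intro x s1 s2 h1 h2
    simp only at h1
    split_ifs at h1 with hc
    have hxs : ¬ (x ∈ S ∧ x < n) := by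
      intro hh
      have := Finset.mem_sdiff.1 hc.1
      exact this.2 hh.1
    rw [mjoin, if_neg hxs, if_pos hc.2] at h2
    rw [← Option.some_inj.1 h1, ← Option.some_inj.1 h2]
  · intro x
    rw [mjoin]
    constructor
    · intro h
      by_cases hc : x ∈ S ∧ x < n
      · left; simp [hc]
      · by_cases hx : x < n
        · right
          have : x ∈ Finset.range n \ S ∧ x < n := by
            refine ⟨Finset.mem_sdiff.2 ⟨Finset.mem_range.2 hx, ?_⟩, hx⟩
            intro hxx
            exact hc ⟨hxx, hx⟩
          simp [this]
        · exact absurd (by rw [if_neg hc, if_neg hx]) h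
    · intro h
      rcases h with h | h
      · split_ifs at h with hc
        · rw [if_pos hc]; simp
        · exact absurd rfl h
      · split_ifs at h with hc
        · rw [if_neg (fun hh => (Finset.mem_sdiff.1 hc.1).2 hh.1), if_pos hc.2]
          simp
        · exact absurd rfl h

def GoodState (n : ℕ) {Q : Type} (A : VA Unit ℕ Q) (S : Finset ℕ) (q : Q) : Prop :=
  ∃ w k qf, qf ∈ A.final ∧ VA.Path A A.init (w.take k) q ∧ VA.Path A q (w.drop k) qf ∧
    refMapping w = mjoin n S ∧ ValidRef w ∧
    (∀ j, k ≤ j → n + 1 ≤ (letters (w.take j)).length) ∧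
    (∀ j, j < k → (letters (w.take j)).length ≤ n)

lemma exists_good {n : ℕ} {Q : Type} {A : VA Unit ℕ Q}
    (hseq : A.Sequential)
    (hsp : A.spanner = joinSpanner (eRegex n).spanner (eRegex' n).spanner)
    (S : Finset ℕ) : ∃ q, GoodState n A S q := by
  have hmem : mjoin n S ∈ A.spanner (List.replicate (2*n+1) ()) := by
    rw [hsp]; exact mjoin_mem n S
  obtain ⟨w, hacc, hlet, hmap⟩ := hmem
  obtain ⟨qf, hqf, hpath⟩ := hacc
  have hvalid : ValidRef w := hseq w ⟨qf, hqf, hpath⟩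
  have hex : ∃ k, n + 1 ≤ (letters (w.take k)).length := by
    refine ⟨w.length, ?_⟩
    rw [List.take_length, hlet, List.length_replicate]
    omega
  set k := Nat.find hex with hk
  have hpath' : VA.Path A A.init (w.take k ++ w.drop k) qf := by
    rw [List.take_append_drop]; exact hpath
  obtain ⟨q, h1, h2⟩ := path_append hpath'
  refine ⟨q, w, k, qf, hqf, h1, h2, hmap, hvalid, ?_, ?_⟩
  · intro j hj
    exact le_trans (Nat.find_spec hex) (lcount_mono w hj)
  · intro j hj
    have := Nat.find_min hex hj
    omega

lemma good_contra {n : ℕ} {Q : Type} {A : VA Unit ℕ Q}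
    (hseq : A.Sequential) {S T : Finset ℕ} {q : Q}
    (hS : GoodState n A S q) (hT : GoodState n A T q)
    {i : ℕ} (hiS : i ∈ S) (hin : i < n) (hiT : i ∉ T) : False := by
  obtain ⟨w, k, qf, hqf, p1, p2, hmap, hval, hge, hlt⟩ := hS
  obtain ⟨w', k', qf', hqf', p1', p2', hmap', hval', hge', hlt'⟩ := hT
  -- facts about the S-side word
  have hmS : refMapping w i = some (i, i + 1) := by
    rw [hmap, mjoin, if_pos ⟨hiS, hin⟩]
  have hmemS : Label.vopen i ∈ w := by
    by_contra hm
    rw [refMapping, if_neg hm] at hmS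
    simp at hmS
  have hidxS : (letters (w.take (w.idxOf (Label.vopen i)))).length = i := by
    rw [refMapping, if_pos hmemS] at hmS
    exact congrArg Prod.fst (Option.some_inj.1 hmS)
  have hltS : w.idxOf (Label.vopen i) < k := by
    by_contra hc
    have := hge _ (le_of_not_gt hc)
    omega
  have hmem_take : Label.vopen i ∈ w.take k := mem_take_of_indexOf hmemS hltS
  -- facts about the T-side word
  have hmT : refMapping w' i = some (n + 1 + i, n + 1 + i + 1) := by
    rw [hmap', mjoin, if_neg (fun hh => hiT hh.1), if_pos hin]
  have hmemT : Label.vopen i ∈ w' := by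
    by_contra hm
    rw [refMapping, if_neg hm] at hmT
    simp at hmT
  have hidxT : (letters (w'.take (w'.idxOf (Label.vopen i)))).length = n + 1 + i := by
    rw [refMapping, if_pos hmemT] at hmT
    exact congrArg Prod.fst (Option.some_inj.1 hmT)
  have hgeT : k' ≤ w'.idxOf (Label.vopen i) := by
    by_contra hc
    have := hlt' _ (lt_of_not_ge hc)
    omega
  have hnot_take : Label.vopen i ∉ w'.take k' := by
    intro hmm
    have := indexOf_lt_of_mem_take hmm
    omega
  have hcountT : w'.count (Label.vopen i) = 1 := by
    rcases hval' i with ⟨hno, -⟩ | ⟨hc, -⟩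
    · exact absurd hmemT hno
    · exact hc
  have hdropT : (w'.drop k').count (Label.vopen i) = 1 := by
    have hsplit : (w'.take k').count (Label.vopen i) +
        (w'.drop k').count (Label.vopen i) = 1 := by
      rw [← List.count_append, List.take_append_drop, hcountT]
    rw [List.count_eq_zero_of_not_mem hnot_take] at hsplit
    omega
  -- the mixed word
  have hacc : A.AcceptsRef (w.take k ++ w'.drop k') :=
    ⟨qf', hqf', path_comp p1 p2'⟩
  have hvmix := hseq _ hacc
  rcases hvmix i with ⟨hno, -⟩ | ⟨hc, -⟩
  · exact hno (List.mem_append.2 (Or.inl hmem_take))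
  · rw [List.count_append] at hc
    have h1c : 0 < (w.take k).count (Label.vopen i) := List.count_pos_iff.2 hmem_take
    omega

lemma card_lower {n : ℕ} {Q : Type} [Fintype Q] (A : VA Unit ℕ Q)
    (hseq : A.Sequential)
    (hsp : A.spanner = joinSpanner (eRegex n).spanner (eRegex' n).spanner) :
    2 ^ n ≤ Fintype.card Q := by
  classical
  have hex := exists_good hseq hsp
  let F : Finset ℕ → Q := fun S => Classical.choose (hex S)
  have hF : ∀ S, GoodState n A S (F S) := fun S => Classical.choose_spec (hex S)
  have hinj : Function.Injective
      (fun S : ((Finset.range n).powerset : Finset (Finset ℕ)) => F S.1) := by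
    rintro ⟨S, hS⟩ ⟨T, hT⟩ hFq
    simp only at hFq
    rw [Finset.mem_powerset] at hS hT
    by_contra hne
    have hne' : S ≠ T := fun h => hne (by simp [h])
    have hcase : (∃ i, i ∈ S ∧ i ∉ T) ∨ (∃ i, i ∈ T ∧ i ∉ S) := by
      by_contra hcc
      push_neg at hcc
      exact hne' (Finset.Subset.antisymm (fun i hi => hcc.1 i hi) (fun i hi => hcc.2 i hi))
    rcases hcase with ⟨i, hiS, hiT⟩ | ⟨i, hiT, hiS⟩
    · exact good_contra hseq (hFq ▸ hF S) (hF T) hiS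
        (Finset.mem_range.1 (hS hiS)) hiT
    · exact good_contra hseq (hFq ▸ hF T) (hF S) hiT
        (Finset.mem_range.1 (hT hiT)) hiS
  have hcard := Fintype.card_le_of_injective _ hinj
  rw [Fintype.card_coe, Finset.card_powerset, Finset.card_range] at hcard
  exact hcard

end Aux


/-- There are constants `c, c' > 0` such that for every (large enough)
`n` there are regex formulas `e, e'` of size at most `c·n` (each assigning every variable
at most once on every document) such that every sequential VA defining `e ⋈ e'` has at
least `2^(c'·n)` states. -/
theorem join_of_regex_state_blowup :
    ∃ c : ℕ, 0 < c ∧ ∃ c' : ℝ, 0 < c' ∧ ∃ N : ℕ, ∀ n : ℕ, N ≤ n →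
      ∃ e e' : Regex Unit ℕ,
        (∀ w ∈ e.refLang, ValidRef w) ∧ (∀ w ∈ e'.refLang, ValidRef w) ∧
        e.size ≤ c * n ∧ e'.size ≤ c * n ∧
        ∀ (Q : Type) (_ : Fintype Q) (A : VA Unit ℕ Q),
          A.Sequential → A.spanner = joinSpanner e.spanner e'.spanner →
          (2 : ℝ) ^ (c' * (n : ℝ)) ≤ (Fintype.card Q : ℝ) := by
  refine ⟨13, by norm_num, 1, by norm_num, 1, ?_⟩
  intro n hn
  refine ⟨eRegex n, eRegex' n, eRegex_valid n, eRegex'_valid n, ?_, ?_, ?_⟩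
  · rw [eRegex, Regex.size, slots_size, padRe_size]
    omega
  · rw [eRegex', Regex.size, slots_size, padRe_size]
    omega
  · intro Q fQ A hseq hsp
    have h := @card_lower n Q fQ A hseq hsp
    have h3 : ((2 ^ n : ℕ) : ℝ) ≤ (Fintype.card Q : ℝ) := Nat.cast_le.mpr h
    calc (2 : ℝ) ^ ((1 : ℝ) * (n : ℝ)) = (2 : ℝ) ^ ((n : ℕ) : ℝ) := by rw [one_mul]
      _ = (2 : ℝ) ^ (n : ℕ) := Real.rpow_natCast 2 n
      _ = ((2 ^ n : ℕ) : ℝ) := by push_cast; ring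
      _ ≤ (Fintype.card Q : ℝ) := h3


end DocSpanners
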